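/- arXiv:0907.3338 — 4 statements merged into one kernel-verified Lean document; each statement's English description precedes it below -/
import Mathlib

section
/- Fix β ∈ ℝ, α ≥ 0, multipliers U : V_S → ℝ, and x ∈ [0,1]^{E_L}. Then the supremum over all y : V_S → ℝ with 0 ≤ y_{(e,e')} ≤ x_e (for every (e,e') ∈ V_S) of the quantity α wᵀ x + (β/2) Σ_{(e,e') ∈ V_S} y_{(e,e')} + Σ_{(e,e') ∈ V_S} U_{(e,e')} (y_{(e,e')} − y_{(e',e)}) is attained and equals Σ_{e ∈ E_L} x_e · w'_e, where w'_e = α w_e + Σ_{e' : (e,e') ∈ V_S} max(0, β/2 + U_{(e,e')} − U_{(e',e)}). In particular, for fixed U the Lagrangian relaxation NALLP reduces to a linear objective w'ᵀ x in x alone. -/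
open Matrix Classical

noncomputable section

/-- Two edges `e = (i,i')` and `e' = (j,j')` of the bipartite graph `L`
form a square if `(i,j) ∈ E_A` and `(i',j') ∈ E_B`. -/
def Square {VA VB : Type*} (A : SimpleGraph VA) (B : SimpleGraph VB)
    (e e' : VA × VB) : Prop :=
  A.Adj e.1 e'.1 ∧ B.Adj e.2 e'.2

/-- The symmetric 0-1 matrix `S` indexed by the edges of `L`, with
`S_{e,e'} = 1` iff `e` and `e'` form a square. -/
def sqMatrix {VA VB : Type*} (A : SimpleGraph VA) (B : SimpleGraph VB)
    (EL : Finset (VA × VB)) : Matrix ↥EL ↥EL ℝ :=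
  fun e e' => if Square A B e.1 e'.1 then 1 else 0

/-- `x` indexed by `E_L` satisfies the matching constraints: at every vertex
of `L`, the sum of `x_e` over incident edges is at most `1`. -/
def MatchCon {VA VB : Type*} (EL : Finset (VA × VB)) (x : ↥EL → ℝ) : Prop :=
  (∀ i : VA, ∑ e : ↥EL, (if (e : VA × VB).1 = i then x e else 0) ≤ 1) ∧
  (∀ i' : VB, ∑ e : ↥EL, (if (e : VA × VB).2 = i' then x e else 0) ≤ 1)

/-- a 0/1-valued vector -/
def IsBinary {ι : Type*} (x : ι → ℝ) : Prop := ∀ i, x i = 0 ∨ x i = 1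

/-- `V_S`: the set of ordered pairs of edges of `E_L` that form a square. -/
abbrev VS {VA VB : Type*} (A : SimpleGraph VA) (B : SimpleGraph VB)
    (EL : Finset (VA × VB)) : Type _ :=
  {p : ↥EL × ↥EL // Square A B p.1.1 p.2.1}

instance {VA VB : Type*} (A : SimpleGraph VA) (B : SimpleGraph VB)
    (EL : Finset (VA × VB)) : Fintype (VS A B EL) :=
  Fintype.ofFinite _

/-- the map `(e,e') ↦ (e',e)` on `V_S` (well defined by symmetry of `V_S`). -/
def VSswap {VA VB : Type*} {A : SimpleGraph VA} {B : SimpleGraph VB}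
    {EL : Finset (VA × VB)} (s : VS A B EL) : VS A B EL :=
  ⟨(s.1.2, s.1.1), s.2.1.symm, s.2.2.symm⟩

/-- The network alignment objective `f(x) = α wᵀ x + (β/2) xᵀ S x`. -/
def netObj {VA VB : Type*} (A : SimpleGraph VA) (B : SimpleGraph VB)
    (EL : Finset (VA × VB)) (α β : ℝ) (w : ↥EL → ℝ) (x : ↥EL → ℝ) : ℝ :=
  α * (w ⬝ᵥ x) + β / 2 * (x ⬝ᵥ (sqMatrix A B EL) *ᵥ x)

/-- The probability distribution `p(x_E, x_S)` on the factor graph. -/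
def pdist {VA VB : Type*} [Fintype VA] [Fintype VB]
    (A : SimpleGraph VA) (B : SimpleGraph VB) (EL : Finset (VA × VB))
    (α β : ℝ) (w : ↥EL → ℝ) (xE : ↥EL → ℝ) (xS : VS A B EL → ℝ) : ℝ :=
  Real.exp (α * (w ⬝ᵥ xE) + β / 2 * ∑ s : VS A B EL, xS s) *
    (∏ i : VA,
      if (∑ e : ↥EL, if (e : VA × VB).1 = i then xE e else 0) ≤ 1 then (1 : ℝ) else 0) *
    (∏ i' : VB,
      if (∑ e : ↥EL, if (e : VA × VB).2 = i' then xE e else 0) ≤ 1 then (1 : ℝ) else 0) *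
    (∏ s : VS A B EL, if xS s = xE s.1.1 * xE s.1.2 then (1 : ℝ) else 0)

/-- for fixed `β`, `α ≥ 0`, multipliers `U` and `x ∈ [0,1]^{E_L}`,
the supremum over `y` with `0 ≤ y_{(e,e')} ≤ x_e` of
`α wᵀ x + (β/2) Σ y + Σ U_{(e,e')}(y_{(e,e')} − y_{(e',e)})` is attained and
equals `Σ_e x_e w'_e`, where
`w'_e = α w_e + Σ_{e' : (e,e') ∈ V_S} max(0, β/2 + U_{(e,e')} − U_{(e',e)})`. -/
theorem stmt8 {VA VB : Type*}
    (A : SimpleGraph VA) (B : SimpleGraph VB) (EL : Finset (VA × VB))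
    (β : ℝ) (α : ℝ) (hα : 0 ≤ α)
    (w : ↥EL → ℝ) (hw : ∀ e, 0 ≤ w e)
    (U : VS A B EL → ℝ)
    (x : ↥EL → ℝ) (hx : ∀ e, 0 ≤ x e ∧ x e ≤ 1) :
    IsGreatest {v : ℝ | ∃ y : VS A B EL → ℝ,
        (∀ s : VS A B EL, 0 ≤ y s ∧ y s ≤ x s.1.1) ∧
        v = α * (w ⬝ᵥ x) + β / 2 * ∑ s : VS A B EL, y s +
          ∑ s : VS A B EL, U s * (y s - y (VSswap s))}
      (∑ e : ↥EL, x e * (α * w e +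
        ∑ s : VS A B EL,
          if s.1.1 = e then max 0 (β / 2 + U s - U (VSswap s)) else 0)) := by
  classical
  set c : VS A B EL → ℝ := fun s => β / 2 + U s - U (VSswap s) with hc
  have hc' : ∀ s, c s = β / 2 + U s - U (VSswap s) := fun s => rfl
  have hswap : ∀ s : VS A B EL, VSswap (VSswap s) = s := by
    rintro ⟨⟨a, b⟩, h⟩; rfl
  have key : ∀ y : VS A B EL → ℝ,
      β / 2 * ∑ s : VS A B EL, y s + ∑ s : VS A B EL, U s * (y s - y (VSswap s))
        = ∑ s : VS A B EL, y s * c s := by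
    intro y
    have hbij : ∑ s : VS A B EL, U s * y (VSswap s)
        = ∑ s : VS A B EL, U (VSswap s) * y s := by
      refine Fintype.sum_bijective VSswap (Function.Involutive.bijective hswap) _ _ ?_
      intro s; rw [hswap]
    have h2 : ∑ s : VS A B EL, U s * (y s - y (VSswap s))
        = ∑ s : VS A B EL, (U s - U (VSswap s)) * y s := by
      simp only [mul_sub, sub_mul, Finset.sum_sub_distrib, hbij]
    rw [h2, Finset.mul_sum, ← Finset.sum_add_distrib]
    apply Finset.sum_congr rfl
    intro s _
    rw [hc']; ring
  have hRHS : (∑ e : ↥EL, x e * (α * w e + ∑ s : VS A B EL,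
        if s.1.1 = e then max 0 (c s) else 0))
      = α * (w ⬝ᵥ x) + ∑ s : VS A B EL, x s.1.1 * max 0 (c s) := by
    simp only [mul_add, Finset.sum_add_distrib, Finset.mul_sum]
    congr 1
    · simp only [dotProduct, Finset.mul_sum]
      apply Finset.sum_congr rfl; intro e _; ring
    · rw [Finset.sum_comm]
      apply Finset.sum_congr rfl
      intro s _
      simp [mul_ite, Finset.sum_ite_eq]
  constructor
  · refine ⟨fun s => if 0 ≤ c s then x s.1.1 else 0, ?_, ?_⟩
    · intro s
      by_cases h : 0 ≤ c s
      · simp [h, (hx s.1.1).1]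
      · simp [h, (hx s.1.1).1]
    · rw [add_assoc, key]
      simp only [← hc']
      rw [hRHS]
      congr 1
      apply Finset.sum_congr rfl
      intro s _
      by_cases h : 0 ≤ c s
      · simp [h, max_eq_right h]
      · simp [h, max_eq_left (le_of_not_ge h)]
  · rintro v ⟨y, hy, rfl⟩
    rw [add_assoc, key]
    simp only [← hc']
    rw [hRHS]
    refine add_le_add_right (Finset.sum_le_sum fun s _ => ?_) _
    calc y s * c s ≤ y s * max 0 (c s) :=
          mul_le_mul_of_nonneg_left (le_max_right _ _) (hy s).1
      _ ≤ x s.1.1 * max 0 (c s) :=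
          mul_le_mul_of_nonneg_right (hy s).2 (le_max_left 0 (c s))
end
end

section
/- (Klau) For every fixed U : V_S → ℝ, the linear program NALLP has an integer optimal solution computable by maximum weight bipartite matching: the supremum of the NALLP objective over all NALLP-feasible pairs (x, y) with in addition y ≥ 0 equals the maximum over all matchings M ⊆ E_L of Σ_{e ∈ M} w'_e, where w'_e = α w_e + Σ_{e' : (e,e') ∈ V_S} max(0, β/2 + U_{(e,e')} − U_{(e',e)}) (here α ≥ 0, β ≥ 0 and w ≥ 0, so w' ≥ 0). -/
open Matrix Classical

noncomputable section

/-- NALLP feasibility: `x ∈ [0,1]^{E_L}`, `y ∈ [0,1]^{V_S}`, `x` satisfies the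
matching constraints, and `y_{(e,e')} ≤ x_e` (no symmetry constraint). -/
def NALLPFeasible {VA VB : Type*} (A : SimpleGraph VA) (B : SimpleGraph VB)
    (EL : Finset (VA × VB)) (x : ↥EL → ℝ) (y : VS A B EL → ℝ) : Prop :=
  (∀ e, 0 ≤ x e ∧ x e ≤ 1) ∧ (∀ s, 0 ≤ y s ∧ y s ≤ 1) ∧ MatchCon EL x ∧
  (∀ s : VS A B EL, y s ≤ x s.1.1)

/-- the NALLP objective with Lagrange multipliers `U`:
`α wᵀ x + (β/2) Σ_{V_S} y + Σ_{(e,e') ∈ V_S} U_{(e,e')} (y_{(e,e')} − y_{(e',e)})` -/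
def nallpObj {VA VB : Type*} (A : SimpleGraph VA) (B : SimpleGraph VB)
    (EL : Finset (VA × VB)) (U : VS A B EL → ℝ) (α β : ℝ) (w : ↥EL → ℝ)
    (x : ↥EL → ℝ) (y : VS A B EL → ℝ) : ℝ :=
  α * (w ⬝ᵥ x) + β / 2 * ∑ s : VS A B EL, y s +
    ∑ s : VS A B EL, U s * (y s - y (VSswap s))

/-- `M ⊆ E_L` is a matching: no two distinct edges of `M` share an endpoint. -/
def IsMatchingSet {VA VB : Type*} (EL : Finset (VA × VB)) (M : Finset ↥EL) : Prop :=
  ∀ e ∈ M, ∀ e' ∈ M, e ≠ e' →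
    (e : VA × VB).1 ≠ (e' : VA × VB).1 ∧ (e : VA × VB).2 ≠ (e' : VA × VB).2


lemma VSswap_invol {VA VB : Type*} {A : SimpleGraph VA} {B : SimpleGraph VB}
    {EL : Finset (VA × VB)} (s : VS A B EL) : VSswap (VSswap s) = s :=
  Subtype.ext rfl

lemma sum_swap_mul {VA VB : Type*} (A : SimpleGraph VA) (B : SimpleGraph VB)
    (EL : Finset (VA × VB)) (U y : VS A B EL → ℝ) :
    ∑ s : VS A B EL, U s * y (VSswap s) = ∑ s : VS A B EL, U (VSswap s) * y s := by
  have hinv : Function.Involutive (VSswap (A := A) (B := B) (EL := EL)) :=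
    fun s => VSswap_invol s
  have h : ∀ s : VS A B EL, U s * y (VSswap s)
      = U (VSswap (hinv.toPerm _ s)) * y (hinv.toPerm _ s) := by
    intro s
    simp only [Function.Involutive.coe_toPerm, VSswap_invol s]
  rw [Finset.sum_congr rfl fun s _ => h s]
  exact Equiv.sum_comp (hinv.toPerm _) (fun s => U (VSswap s) * y s)

lemma obj_eq {VA VB : Type*} (A : SimpleGraph VA) (B : SimpleGraph VB)
    (EL : Finset (VA × VB)) (U : VS A B EL → ℝ) (α β : ℝ) (w : ↥EL → ℝ)
    (x : ↥EL → ℝ) (y : VS A B EL → ℝ) :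
    nallpObj A B EL U α β w x y
      = α * (w ⬝ᵥ x) + ∑ s : VS A B EL, (β / 2 + U s - U (VSswap s)) * y s := by
  unfold nallpObj
  have h1 : ∑ s : VS A B EL, U s * (y s - y (VSswap s))
      = ∑ s : VS A B EL, (U s - U (VSswap s)) * y s := by
    simp only [mul_sub, sub_mul, Finset.sum_sub_distrib]
    rw [sum_swap_mul A B EL U y]
  rw [h1, Finset.mul_sum, add_assoc, ← Finset.sum_add_distrib]
  congr 1
  exact Finset.sum_congr rfl fun s _ => by ring

lemma group_sum {VA VB : Type*} (A : SimpleGraph VA) (B : SimpleGraph VB)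
    (EL : Finset (VA × VB)) (g : VS A B EL → ℝ) (x : ↥EL → ℝ) :
    ∑ e : ↥EL, (∑ s : VS A B EL, if s.1.1 = e then g s else 0) * x e
      = ∑ s : VS A B EL, g s * x s.1.1 := by
  have h1 : ∀ e : ↥EL, (∑ s : VS A B EL, if s.1.1 = e then g s else 0) * x e
      = ∑ s : VS A B EL, if s.1.1 = e then g s * x e else 0 := fun e => by
    rw [Finset.sum_mul]
    exact Finset.sum_congr rfl fun s _ => by split <;> simp
  rw [Finset.sum_congr rfl fun e _ => h1 e, Finset.sum_comm]
  refine Finset.sum_congr rfl fun s _ => ?_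
  rw [Fintype.sum_eq_single s.1.1]
  · exact if_pos rfl
  · intro e he
    exact if_neg fun hc => he hc.symm
lemma keyB {VA VB : Type*} (EL : Finset (VA × VB)) (c : ↥EL → ℝ)
    (x : ↥EL → ℝ) (hx0 : ∀ e, 0 ≤ x e) (hm : MatchCon EL x)
    (v : ℝ) (hv : ∀ M : Finset ↥EL, IsMatchingSet EL M → ∑ e ∈ M, c e ≤ v) :
    ∑ e : ↥EL, c e * x e ≤ v := by
  classical
  obtain ⟨hmA, hmB⟩ := hm
  set FA := EL.image Prod.fst with hFAdef
  set FB := EL.image Prod.snd with hFBdef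
  have memA : ∀ e : ↥EL, (e : VA × VB).1 ∈ FA := fun e => Finset.mem_image_of_mem _ e.2
  have memB : ∀ e : ↥EL, (e : VA × VB).2 ∈ FB := fun e => Finset.mem_image_of_mem _ e.2
  set dA : ↥FA → ℝ := fun a => ∑ e : ↥EL, if (e : VA × VB).1 = ↑a then x e else 0 with hdA
  set dB : ↥FB → ℝ := fun b => ∑ e : ↥EL, if (e : VA × VB).2 = ↑b then x e else 0 with hdB
  set Ent : ↥FA → ↥FB → ℝ :=
    fun a b => ∑ e : ↥EL, if (e : VA × VB) = (↑a, ↑b) then x e else 0 with hEntdef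
  have hEntnn : ∀ a b, 0 ≤ Ent a b := fun a b =>
    Finset.sum_nonneg fun e _ => by
      by_cases h : (e : VA × VB) = (↑a, ↑b) <;> simp [h, hx0 e]
  have hdA1 : ∀ a, dA a ≤ 1 := fun a => hmA ↑a
  have hdB1 : ∀ b, dB b ≤ 1 := fun b => hmB ↑b
  have hrowEnt : ∀ a : ↥FA, ∑ b : ↥FB, Ent a b = dA a := by
    intro a
    simp only [hEntdef, hdA]
    rw [Finset.sum_comm]
    refine Finset.sum_congr rfl fun e _ => ?_
    by_cases h : (e : VA × VB).1 = ↑a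
    · rw [if_pos h, Fintype.sum_eq_single (⟨(e : VA × VB).2, memB e⟩ : ↥FB)]
      · refine if_pos ?_
        exact Prod.ext_iff.mpr ⟨h, rfl⟩
      · intro b hb
        exact if_neg fun hc => hb (Subtype.ext (congrArg Prod.snd hc).symm)
    · rw [if_neg h]
      exact Finset.sum_eq_zero fun b _ => if_neg fun hc => h (congrArg Prod.fst hc)
  have hcolEnt : ∀ b : ↥FB, ∑ a : ↥FA, Ent a b = dB b := by
    intro b
    simp only [hEntdef, hdB]
    rw [Finset.sum_comm]
    refine Finset.sum_congr rfl fun e _ => ?_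
    by_cases h : (e : VA × VB).2 = ↑b
    · rw [if_pos h, Fintype.sum_eq_single (⟨(e : VA × VB).1, memA e⟩ : ↥FA)]
      · refine if_pos ?_
        exact Prod.ext_iff.mpr ⟨rfl, h⟩
      · intro a ha
        exact if_neg fun hc => ha (Subtype.ext (congrArg Prod.fst hc).symm)
    · rw [if_neg h]
      exact Finset.sum_eq_zero fun a _ => if_neg fun hc => h (congrArg Prod.snd hc)
  set Mx : Matrix (↥FA ⊕ ↥FB) (↥FA ⊕ ↥FB) ℝ := fun i j =>
    match i, j with
    | Sum.inl a, Sum.inl a' => if a = a' then 1 - dA a else 0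
    | Sum.inl a, Sum.inr b => Ent a b
    | Sum.inr b, Sum.inl a => Ent a b
    | Sum.inr b, Sum.inr b' => if b = b' then 1 - dB b else 0
    with hMx
  have hds : Mx ∈ doublyStochastic ℝ (↥FA ⊕ ↥FB) := by
    rw [mem_doublyStochastic_iff_sum]
    refine ⟨?_, ?_, ?_⟩
    · rintro (a | b) (a' | b')
      · show (0:ℝ) ≤ if a = a' then 1 - dA a else 0
        have := hdA1 a
        split <;> linarith
      · exact hEntnn a b'
      · exact hEntnn a' b
      · show (0:ℝ) ≤ if b = b' then 1 - dB b else 0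
        have := hdB1 b
        split <;> linarith
    · rintro (a | b)
      · rw [Fintype.sum_sum_type]
        have h1 : ∑ a' : ↥FA, Mx (Sum.inl a) (Sum.inl a') = 1 - dA a := by
          show (∑ a' : ↥FA, if a = a' then 1 - dA a else 0) = 1 - dA a
          simp [Finset.sum_ite_eq]
        have h2 : ∑ b : ↥FB, Mx (Sum.inl a) (Sum.inr b) = dA a := hrowEnt a
        rw [h1, h2]; ring
      · rw [Fintype.sum_sum_type]
        have h1 : ∑ a : ↥FA, Mx (Sum.inr b) (Sum.inl a) = dB b := hcolEnt b
        have h2 : ∑ b' : ↥FB, Mx (Sum.inr b) (Sum.inr b') = 1 - dB b := by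
          show (∑ b' : ↥FB, if b = b' then 1 - dB b else 0) = 1 - dB b
          simp [Finset.sum_ite_eq]
        rw [h1, h2]; ring
    · rintro (a | b)
      · rw [Fintype.sum_sum_type]
        have h1 : ∑ a' : ↥FA, Mx (Sum.inl a') (Sum.inl a) = 1 - dA a := by
          show (∑ a' : ↥FA, if a' = a then 1 - dA a' else 0) = 1 - dA a
          simp [Finset.sum_ite_eq']
        have h2 : ∑ b : ↥FB, Mx (Sum.inr b) (Sum.inl a) = dA a := hrowEnt a
        rw [h1, h2]; ring
      · rw [Fintype.sum_sum_type]
        have h1 : ∑ a : ↥FA, Mx (Sum.inl a) (Sum.inr b) = dB b := hcolEnt b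
        have h2 : ∑ b' : ↥FB, Mx (Sum.inr b') (Sum.inr b) = 1 - dB b := by
          show (∑ b' : ↥FB, if b' = b then 1 - dB b' else 0) = 1 - dB b
          simp [Finset.sum_ite_eq']
        rw [h1, h2]; ring
  obtain ⟨wt, hwt0, hwt1, hwtM⟩ := exists_eq_sum_perm_of_mem_doublyStochastic hds
  have hperm : ∀ (σ : Equiv.Perm (↥FA ⊕ ↥FB)) (i j : ↥FA ⊕ ↥FB),
      σ.permMatrix ℝ i j = if σ i = j then 1 else 0 := by
    intro σ i j
    simp [Equiv.Perm.permMatrix, PEquiv.toMatrix_apply, Equiv.toPEquiv_apply, Option.mem_def,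
      eq_comm]
  have hMentry : ∀ e : ↥EL,
      Mx (Sum.inl ⟨(e : VA × VB).1, memA e⟩) (Sum.inr ⟨(e : VA × VB).2, memB e⟩) = x e := by
    intro e
    show Ent _ _ = x e
    simp only [hEntdef]
    rw [Fintype.sum_eq_single e]
    · exact if_pos rfl
    · intro e' he'
      exact if_neg fun hc => he' (Subtype.ext hc)
  have hMix : ∀ i j, Mx i j = ∑ σ : Equiv.Perm (↥FA ⊕ ↥FB), wt σ * σ.permMatrix ℝ i j := by
    intro i j
    rw [← hwtM]
    simp [Matrix.sum_apply, Matrix.smul_apply, smul_eq_mul]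
  calc ∑ e : ↥EL, c e * x e
      = ∑ e : ↥EL, ∑ σ : Equiv.Perm (↥FA ⊕ ↥FB), c e * (wt σ *
          σ.permMatrix ℝ (Sum.inl ⟨(e : VA × VB).1, memA e⟩)
            (Sum.inr ⟨(e : VA × VB).2, memB e⟩)) := by
        refine Finset.sum_congr rfl fun e _ => ?_
        rw [← hMentry e]
        rw [hMix (Sum.inl ⟨(e : VA × VB).1, memA e⟩) (Sum.inr ⟨(e : VA × VB).2, memB e⟩)]
        rw [Finset.mul_sum]
    _ = ∑ σ : Equiv.Perm (↥FA ⊕ ↥FB), wt σ * ∑ e : ↥EL, c e *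
          σ.permMatrix ℝ (Sum.inl ⟨(e : VA × VB).1, memA e⟩)
            (Sum.inr ⟨(e : VA × VB).2, memB e⟩) := by
        rw [Finset.sum_comm]
        refine Finset.sum_congr rfl fun σ _ => ?_
        rw [Finset.mul_sum]
        exact Finset.sum_congr rfl fun e _ => by ring
    _ ≤ ∑ σ : Equiv.Perm (↥FA ⊕ ↥FB), wt σ * v := by
        refine Finset.sum_le_sum fun σ _ => mul_le_mul_of_nonneg_left ?_ (hwt0 σ)
        set Mσ := Finset.univ.filter
          (fun e : ↥EL => σ (Sum.inl ⟨(e : VA × VB).1, memA e⟩)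
            = Sum.inr ⟨(e : VA × VB).2, memB e⟩) with hMσ
        have hsum : (∑ e : ↥EL, c e *
            σ.permMatrix ℝ (Sum.inl ⟨(e : VA × VB).1, memA e⟩)
              (Sum.inr ⟨(e : VA × VB).2, memB e⟩)) = ∑ e ∈ Mσ, c e := by
          rw [hMσ, Finset.sum_filter]
          refine Finset.sum_congr rfl fun e _ => ?_
          rw [hperm]
          by_cases h : σ (Sum.inl ⟨(e : VA × VB).1, memA e⟩)
              = Sum.inr ⟨(e : VA × VB).2, memB e⟩ <;> simp [h]
        rw [hsum]
        refine hv Mσ ?_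
        intro e he e' he' hne
        rw [hMσ, Finset.mem_filter] at he he'
        constructor
        · intro h1
          apply hne
          have hia : (Sum.inl (⟨(e : VA × VB).1, memA e⟩ : ↥FA) : ↥FA ⊕ ↥FB)
              = Sum.inl (⟨(e' : VA × VB).1, memA e'⟩ : ↥FA) :=
            congrArg _ (Subtype.ext h1)
          have h2 := he.2
          rw [hia, he'.2] at h2
          have h3 : (e : VA × VB).2 = (e' : VA × VB).2 :=
            congrArg Subtype.val (Sum.inr_injective h2.symm)
          exact Subtype.ext (Prod.ext_iff.mpr ⟨h1, h3⟩)
        · intro h1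
          apply hne
          have hib : (Sum.inr (⟨(e : VA × VB).2, memB e⟩ : ↥FB) : ↥FA ⊕ ↥FB)
              = Sum.inr (⟨(e' : VA × VB).2, memB e'⟩ : ↥FB) :=
            congrArg _ (Subtype.ext h1)
          have h2 : σ (Sum.inl ⟨(e : VA × VB).1, memA e⟩)
              = σ (Sum.inl ⟨(e' : VA × VB).1, memA e'⟩) := by
            rw [he.2, he'.2, hib]
          have h3 : (e : VA × VB).1 = (e' : VA × VB).1 :=
            congrArg Subtype.val (Sum.inl_injective (σ.injective h2))
          exact Subtype.ext (Prod.ext_iff.mpr ⟨h3, h1⟩)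
    _ = v := by rw [← Finset.sum_mul, hwt1, one_mul]

/-- Klau: for every fixed `U`, the linear program NALLP has an
integer optimal solution computable by maximum weight bipartite matching: the
supremum of the NALLP objective over NALLP-feasible pairs (with `y ≥ 0`) equals
the maximum over all matchings `M ⊆ E_L` of `Σ_{e ∈ M} w'_e`, where
`w'_e = α w_e + Σ_{e' : (e,e') ∈ V_S} max(0, β/2 + U_{(e,e')} − U_{(e',e)})`. -/
theorem stmt9 {VA VB : Type*}
    (A : SimpleGraph VA) (B : SimpleGraph VB) (EL : Finset (VA × VB))
    (α β : ℝ) (hα : 0 ≤ α) (hβ : 0 ≤ β)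
    (w : ↥EL → ℝ) (hw : ∀ e, 0 ≤ w e)
    (U : VS A B EL → ℝ) :
    ∃ v : ℝ,
      IsLUB {v' : ℝ | ∃ (x : ↥EL → ℝ) (y : VS A B EL → ℝ),
          NALLPFeasible A B EL x y ∧ (∀ s, 0 ≤ y s) ∧
          v' = nallpObj A B EL U α β w x y} v ∧
      IsGreatest {v' : ℝ | ∃ M : Finset ↥EL, IsMatchingSet EL M ∧
          v' = ∑ e ∈ M, (α * w e +
            ∑ s : VS A B EL,
              if s.1.1 = e then max 0 (β / 2 + U s - U (VSswap s)) else 0)} v := by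
  classical
  set w' : ↥EL → ℝ := fun e =>
    α * w e + ∑ s : VS A B EL, if s.1.1 = e then max 0 (β / 2 + U s - U (VSswap s)) else 0
    with hw'
  set T : Finset ℝ := (Finset.univ.filter (fun M : Finset ↥EL => IsMatchingSet EL M)).image
    (fun M => ∑ e ∈ M, w' e) with hT
  have hemptyM : IsMatchingSet EL (∅ : Finset ↥EL) := fun e he =>
    absurd he (Finset.notMem_empty e)
  have hne : T.Nonempty := ⟨∑ e ∈ (∅ : Finset ↥EL), w' e,
    Finset.mem_image_of_mem _ (Finset.mem_filter.2 ⟨Finset.mem_univ _, hemptyM⟩)⟩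
  set v := T.max' hne with hvdef
  obtain ⟨M0, hM0mem, hM0v⟩ := Finset.mem_image.1 (T.max'_mem hne)
  have hM0 : IsMatchingSet EL M0 := (Finset.mem_filter.1 hM0mem).2
  have hub : ∀ M : Finset ↥EL, IsMatchingSet EL M → ∑ e ∈ M, w' e ≤ v := by
    intro M hM
    apply Finset.le_max' T
    exact Finset.mem_image_of_mem _ (Finset.mem_filter.2 ⟨Finset.mem_univ _, hM⟩)
  set x0 : ↥EL → ℝ := fun e => if e ∈ M0 then 1 else 0 with hx0def
  set y0 : VS A B EL → ℝ :=
    fun s => if 0 ≤ β / 2 + U s - U (VSswap s) then x0 s.1.1 else 0 with hy0def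
  have hx0bd : ∀ e, 0 ≤ x0 e ∧ x0 e ≤ 1 := by
    intro e
    simp only [hx0def]
    split <;> norm_num
  have hy0bd : ∀ s, 0 ≤ y0 s ∧ y0 s ≤ 1 := by
    intro s
    simp only [hy0def]
    split
    · exact hx0bd s.1.1
    · norm_num
  have hmc0 : MatchCon EL x0 := by
    constructor
    · intro i
      have key : ∀ e : ↥EL, (if (e : VA × VB).1 = i then x0 e else 0)
          = if e ∈ M0.filter (fun e' : ↥EL => (e' : VA × VB).1 = i) then (1 : ℝ) else 0 := by
        intro e
        simp only [hx0def]
        by_cases h1 : (e : VA × VB).1 = i <;> by_cases h2 : e ∈ M0 <;>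
          simp [h1, h2, Finset.mem_filter]
      rw [Finset.sum_congr rfl fun e _ => key e, Finset.sum_boole]
      have hcard : (Finset.univ.filter
          (fun e => e ∈ M0.filter (fun e' : ↥EL => (e' : VA × VB).1 = i))).card ≤ 1 := by
        refine Finset.card_le_one.2 fun a ha b hb => ?_
        rw [Finset.mem_filter, Finset.mem_filter] at ha hb
        by_contra hne'
        exact (hM0 a ha.2.1 b hb.2.1 hne').1 (ha.2.2.trans hb.2.2.symm)
      exact_mod_cast hcard
    · intro i
      have key : ∀ e : ↥EL, (if (e : VA × VB).2 = i then x0 e else 0)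
          = if e ∈ M0.filter (fun e' : ↥EL => (e' : VA × VB).2 = i) then (1 : ℝ) else 0 := by
        intro e
        simp only [hx0def]
        by_cases h1 : (e : VA × VB).2 = i <;> by_cases h2 : e ∈ M0 <;>
          simp [h1, h2, Finset.mem_filter]
      rw [Finset.sum_congr rfl fun e _ => key e, Finset.sum_boole]
      have hcard : (Finset.univ.filter
          (fun e => e ∈ M0.filter (fun e' : ↥EL => (e' : VA × VB).2 = i))).card ≤ 1 := by
        refine Finset.card_le_one.2 fun a ha b hb => ?_
        rw [Finset.mem_filter, Finset.mem_filter] at ha hb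
        by_contra hne'
        exact (hM0 a ha.2.1 b hb.2.1 hne').2 (ha.2.2.trans hb.2.2.symm)
      exact_mod_cast hcard
  have hy0x0 : ∀ s : VS A B EL, y0 s ≤ x0 s.1.1 := by
    intro s
    simp only [hy0def]
    split
    · exact le_rfl
    · exact (hx0bd s.1.1).1
  have hval : nallpObj A B EL U α β w x0 y0 = ∑ e ∈ M0, w' e := by
    rw [obj_eq]
    have hcy : ∀ s : VS A B EL, (β / 2 + U s - U (VSswap s)) * y0 s
        = max 0 (β / 2 + U s - U (VSswap s)) * x0 s.1.1 := by
      intro s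
      simp only [hy0def]
      by_cases h : 0 ≤ β / 2 + U s - U (VSswap s)
      · rw [if_pos h, max_eq_right h]
      · rw [if_neg h, mul_zero, max_eq_left (le_of_not_ge h), zero_mul]
    rw [Finset.sum_congr rfl fun s _ => hcy s, ← group_sum A B EL _ x0]
    have hdot : α * (w ⬝ᵥ x0) = ∑ e : ↥EL, (α * w e) * x0 e := by
      rw [dotProduct, Finset.mul_sum]
      exact Finset.sum_congr rfl fun e _ => by ring
    rw [hdot, ← Finset.sum_add_distrib]
    have hcomb : ∀ e : ↥EL, (α * w e) * x0 e +
        (∑ s : VS A B EL, if s.1.1 = e then max 0 (β / 2 + U s - U (VSswap s)) else 0) * x0 e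
        = w' e * x0 e := fun e => by rw [hw']; ring
    rw [Finset.sum_congr rfl fun e _ => hcomb e]
    simp only [hx0def, mul_ite, mul_one, mul_zero]
    simp only [Finset.sum_ite_mem]
    congr 1
    exact Finset.inter_eq_right.2 fun e _ => Finset.mem_attach _ e
  refine ⟨v, ?_, ?_, ?_⟩
  · refine IsGreatest.isLUB ⟨⟨x0, y0, ⟨hx0bd, hy0bd, hmc0, hy0x0⟩, fun s => (hy0bd s).1, ?_⟩, ?_⟩
    · rw [hval, hM0v]
    · rintro v' ⟨x, y, ⟨hx01, hy01, hmc, hyx⟩, hy0, rfl⟩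
      rw [obj_eq]
      have hstep : ∀ s : VS A B EL, (β / 2 + U s - U (VSswap s)) * y s
          ≤ max 0 (β / 2 + U s - U (VSswap s)) * x s.1.1 := by
        intro s
        calc (β / 2 + U s - U (VSswap s)) * y s
            ≤ max 0 (β / 2 + U s - U (VSswap s)) * y s :=
              mul_le_mul_of_nonneg_right (le_max_right _ _) (hy0 s)
          _ ≤ max 0 (β / 2 + U s - U (VSswap s)) * x s.1.1 :=
              mul_le_mul_of_nonneg_left (hyx s) (le_max_left _ _)
      calc α * (w ⬝ᵥ x) + ∑ s : VS A B EL, (β / 2 + U s - U (VSswap s)) * y s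
          ≤ α * (w ⬝ᵥ x) +
            ∑ s : VS A B EL, max 0 (β / 2 + U s - U (VSswap s)) * x s.1.1 :=
            add_le_add_right (Finset.sum_le_sum fun s _ => hstep s) _
        _ = ∑ e : ↥EL, w' e * x e := by
            rw [← group_sum A B EL _ x]
            have hdot : α * (w ⬝ᵥ x) = ∑ e : ↥EL, (α * w e) * x e := by
              rw [dotProduct, Finset.mul_sum]
              exact Finset.sum_congr rfl fun e _ => by ring
            rw [hdot, ← Finset.sum_add_distrib]
            exact Finset.sum_congr rfl fun e _ => by rw [hw']; ring
        _ ≤ v := keyB EL w' x (fun e => (hx01 e).1) hmc v hub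
  · exact ⟨M0, hM0, hM0v.symm⟩
  · rintro v' ⟨M, hM, rfl⟩
    exact hub M hM
end
end

section
/- For every U : V_S → ℝ, the tightened Lagrangian relaxation NATLP is sandwiched between the integer optimum and the looser relaxation: (maximum of f(x) = α wᵀ x + (β/2) xᵀ S x over binary x satisfying the matching constraints) ≤ (supremum of the NALLP objective over NATLP-feasible pairs) ≤ (supremum of the NALLP objective over NALLP-feasible pairs). In particular, every binary feasible x of NAQP together with y_{(e,e')} = x_e · x_{e'} satisfies the additional row-matching constraints of NATLP and attains NALLP objective value f(x). -/
open Matrix Classical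

noncomputable section

/-- NATLP feasibility: NALLP feasibility together with the additional
row-matching constraints on `y`. -/
def NATLPFeasible {VA VB : Type*} (A : SimpleGraph VA) (B : SimpleGraph VB)
    (EL : Finset (VA × VB)) (x : ↥EL → ℝ) (y : VS A B EL → ℝ) : Prop :=
  NALLPFeasible A B EL x y ∧
  (∀ (e : ↥EL) (j' : VB),
    ∑ s : VS A B EL,
      (if s.1.1 = e ∧ (s.1.2 : VA × VB).2 = j' then y s else 0) ≤ 1) ∧
  (∀ (e : ↥EL) (j : VA),
    ∑ s : VS A B EL,
      (if s.1.1 = e ∧ (s.1.2 : VA × VB).1 = j then y s else 0) ≤ 1)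


section Aux

variable {VA VB : Type*} {A : SimpleGraph VA} {B : SimpleGraph VB} {EL : Finset (VA × VB)}

private lemma sum_VS_eq_filter (f : ↥EL × ↥EL → ℝ) :
    ∑ s : VS A B EL, f s.1 =
      ∑ p ∈ Finset.univ.filter (fun p : ↥EL × ↥EL => Square A B p.1.1 p.2.1), f p := by
  classical
  exact (Finset.sum_subtype _ (by simp) f).symm

private lemma quad_eq (x : ↥EL → ℝ) :
    x ⬝ᵥ (sqMatrix A B EL) *ᵥ x = ∑ s : VS A B EL, x s.1.1 * x s.1.2 := by
  classical
  rw [sum_VS_eq_filter (A := A) (B := B) (fun p => x p.1 * x p.2),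
    Finset.sum_filter, Fintype.sum_prod_type]
  simp only [dotProduct, mulVec, sqMatrix, Finset.mul_sum, Fintype.sum_prod_type]
  refine Finset.sum_congr rfl fun a _ => Finset.sum_congr rfl fun b _ => ?_
  by_cases h : Square A B (a : VA × VB) (b : VA × VB) <;> simp [dotProduct, h, mul_comm]

private lemma row_sum_le (x : ↥EL → ℝ) (h0 : ∀ e, 0 ≤ x e) (h1 : ∀ e, x e ≤ 1)
    (e : ↥EL) (P : ↥EL → Prop)
    (hm : ∑ b : ↥EL, (if P b then x b else 0) ≤ 1) :
    ∑ s : VS A B EL, (if s.1.1 = e ∧ P s.1.2 then x s.1.1 * x s.1.2 else 0) ≤ 1 := by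
  classical
  rw [sum_VS_eq_filter (A := A) (B := B)
    (fun p => if p.1 = e ∧ P p.2 then x p.1 * x p.2 else 0)]
  refine le_trans
    (Finset.sum_le_sum_of_subset_of_nonneg (Finset.filter_subset _ _)
      (fun p _ _ => by
        split_ifs
        · exact mul_nonneg (h0 _) (h0 _)
        · exact le_rfl)) ?_
  rw [Fintype.sum_prod_type]
  simp only [ite_and]
  rw [Finset.sum_comm]
  calc ∑ b : ↥EL, ∑ a : ↥EL, (if a = e then if P b then x a * x b else 0 else 0)
      = ∑ b : ↥EL, (if P b then x e * x b else 0) := by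
        refine Finset.sum_congr rfl fun b _ => ?_
        rw [Finset.sum_ite_eq' Finset.univ e (fun a => if P b then x a * x b else 0)]
        simp
    _ ≤ ∑ b : ↥EL, (if P b then x b else 0) := by
        refine Finset.sum_le_sum fun b _ => ?_
        by_cases h : P b
        · simp only [h, if_true]
          calc x e * x b ≤ 1 * x b := mul_le_mul_of_nonneg_right (h1 e) (h0 b)
            _ = x b := one_mul _
        · simp [h]
    _ ≤ 1 := hm


private lemma binary_feas (x : ↥EL → ℝ) (hx : IsBinary x) (hm : MatchCon EL x) :
    NATLPFeasible A B EL x (fun s => x s.1.1 * x s.1.2) := by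
  have h0 : ∀ e, 0 ≤ x e := fun e => by rcases hx e with h | h <;> simp [h]
  have h1 : ∀ e, x e ≤ 1 := fun e => by rcases hx e with h | h <;> simp [h]
  refine ⟨⟨fun e => ⟨h0 e, h1 e⟩,
      fun s => ⟨mul_nonneg (h0 _) (h0 _), ?_⟩, hm, fun s => ?_⟩, ?_, ?_⟩
  · calc x s.1.1 * x s.1.2 ≤ 1 * 1 :=
        mul_le_mul (h1 _) (h1 _) (h0 _) zero_le_one
      _ = 1 := one_mul _
  · calc x s.1.1 * x s.1.2 ≤ x s.1.1 * 1 := mul_le_mul_of_nonneg_left (h1 _) (h0 _)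
      _ = x s.1.1 := mul_one _
  · intro e j'
    exact row_sum_le x h0 h1 e (fun b => (b : VA × VB).2 = j') (hm.2 j')
  · intro e j
    exact row_sum_le x h0 h1 e (fun b => (b : VA × VB).1 = j) (hm.1 j)

private lemma obj_eq_s10 (U : VS A B EL → ℝ) (α β : ℝ) (w x : ↥EL → ℝ) :
    nallpObj A B EL U α β w x (fun s => x s.1.1 * x s.1.2) = netObj A B EL α β w x := by
  unfold nallpObj netObj
  rw [quad_eq]
  have h : ∑ s : VS A B EL,
      U s * (x s.1.1 * x s.1.2 - x (VSswap s).1.1 * x (VSswap s).1.2) = 0 :=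
    Finset.sum_eq_zero fun s _ => by simp [VSswap, mul_comm]
  simp only [h, add_zero]

private lemma obj_bdd (U : VS A B EL → ℝ) (α β : ℝ) (hα : 0 ≤ α) (hβ : 0 ≤ β)
    (w : ↥EL → ℝ) (hw : ∀ e, 0 ≤ w e) {x : ↥EL → ℝ} {y : VS A B EL → ℝ}
    (hf : NALLPFeasible A B EL x y) :
    nallpObj A B EL U α β w x y ≤
      α * ∑ e : ↥EL, w e + β / 2 * (Fintype.card (VS A B EL)) +
        ∑ s : VS A B EL, |U s| := by
  obtain ⟨hx, hy, -, -⟩ := hf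
  unfold nallpObj
  refine add_le_add (add_le_add ?_ ?_) ?_
  · refine mul_le_mul_of_nonneg_left ?_ hα
    rw [dotProduct]
    refine Finset.sum_le_sum fun e _ => ?_
    calc w e * x e ≤ w e * 1 := mul_le_mul_of_nonneg_left (hx e).2 (hw e)
      _ = w e := mul_one _
  · refine mul_le_mul_of_nonneg_left ?_ (by positivity)
    calc ∑ s : VS A B EL, y s ≤ ∑ _s : VS A B EL, (1 : ℝ) :=
        Finset.sum_le_sum fun s _ => (hy s).2
      _ = Fintype.card (VS A B EL) := by simp
  · refine Finset.sum_le_sum fun s _ => ?_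
    calc U s * (y s - y (VSswap s)) ≤ |U s * (y s - y (VSswap s))| := le_abs_self _
      _ = |U s| * |y s - y (VSswap s)| := abs_mul _ _
      _ ≤ |U s| * 1 := mul_le_mul_of_nonneg_left
          (abs_le.2 ⟨by linarith [(hy s).1, (hy (VSswap s)).2],
            by linarith [(hy s).2, (hy (VSswap s)).1]⟩) (abs_nonneg _)
      _ = |U s| := mul_one _

private lemma zero_feas :
    NATLPFeasible A B EL (fun _ => 0) (fun _ => 0) := by
  refine ⟨⟨fun e => ⟨le_rfl, zero_le_one⟩, fun s => ⟨le_rfl, zero_le_one⟩,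
    ⟨fun i => ?_, fun i' => ?_⟩, fun s => le_rfl⟩, fun e j' => ?_, fun e j => ?_⟩ <;> simp

end Aux
/-- for every `U`, the tightened relaxation NATLP is sandwiched
between the integer optimum and the looser relaxation NALLP; in particular,
every binary feasible `x` of NAQP together with `y_{(e,e')} = x_e · x_{e'}`
is NATLP-feasible and attains NALLP objective value
`f(x) = α wᵀ x + (β/2) xᵀ S x`. -/
theorem stmt10 {VA VB : Type*}
    (A : SimpleGraph VA) (B : SimpleGraph VB) (EL : Finset (VA × VB))
    (α β : ℝ) (hα : 0 ≤ α) (hβ : 0 ≤ β)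
    (w : ↥EL → ℝ) (hw : ∀ e, 0 ≤ w e)
    (U : VS A B EL → ℝ) :
    (∀ x : ↥EL → ℝ, IsBinary x → MatchCon EL x →
      NATLPFeasible A B EL x (fun s => x s.1.1 * x s.1.2) ∧
      nallpObj A B EL U α β w x (fun s => x s.1.1 * x s.1.2) =
        netObj A B EL α β w x) ∧
    (∀ x : ↥EL → ℝ, IsBinary x → MatchCon EL x →
      netObj A B EL α β w x ≤
        sSup {v : ℝ | ∃ (x' : ↥EL → ℝ) (y' : VS A B EL → ℝ),
          NATLPFeasible A B EL x' y' ∧ v = nallpObj A B EL U α β w x' y'}) ∧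
    sSup {v : ℝ | ∃ (x' : ↥EL → ℝ) (y' : VS A B EL → ℝ),
        NATLPFeasible A B EL x' y' ∧ v = nallpObj A B EL U α β w x' y'} ≤
      sSup {v : ℝ | ∃ (x' : ↥EL → ℝ) (y' : VS A B EL → ℝ),
        NALLPFeasible A B EL x' y' ∧ v = nallpObj A B EL U α β w x' y'} := by
  classical
  have hpart1 : ∀ x : ↥EL → ℝ, IsBinary x → MatchCon EL x →
      NATLPFeasible A B EL x (fun s => x s.1.1 * x s.1.2) ∧
      nallpObj A B EL U α β w x (fun s => x s.1.1 * x s.1.2) =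
        netObj A B EL α β w x :=
    fun x hx hm => ⟨binary_feas x hx hm, obj_eq_s10 U α β w x⟩
  have hbddL : BddAbove {v : ℝ | ∃ (x' : ↥EL → ℝ) (y' : VS A B EL → ℝ),
      NALLPFeasible A B EL x' y' ∧ v = nallpObj A B EL U α β w x' y'} := by
    refine ⟨α * ∑ e : ↥EL, w e + β / 2 * (Fintype.card (VS A B EL)) +
      ∑ s : VS A B EL, |U s|, ?_⟩
    rintro v ⟨x', y', hf, rfl⟩
    exact obj_bdd U α β hα hβ w hw hf
  have hbddT : BddAbove {v : ℝ | ∃ (x' : ↥EL → ℝ) (y' : VS A B EL → ℝ),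
      NATLPFeasible A B EL x' y' ∧ v = nallpObj A B EL U α β w x' y'} := by
    refine ⟨α * ∑ e : ↥EL, w e + β / 2 * (Fintype.card (VS A B EL)) +
      ∑ s : VS A B EL, |U s|, ?_⟩
    rintro v ⟨x', y', hf, rfl⟩
    exact obj_bdd U α β hα hβ w hw hf.1
  refine ⟨hpart1, ?_, ?_⟩
  · intro x hx hm
    obtain ⟨hfeas, heq⟩ := hpart1 x hx hm
    exact le_csSup hbddT ⟨x, fun s => x s.1.1 * x s.1.2, hfeas, heq.symm⟩
  · refine csSup_le_csSup hbddL
      ⟨_, fun _ => 0, fun _ => 0, zero_feas, rfl⟩ ?_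
    rintro v ⟨x', y', hf, rfl⟩
    exact ⟨x', y', hf.1, rfl⟩
end
end

section
/- Max-product message through a matching-constraint function node simplifies to a log-likelihood formula: let K be a finite nonempty set, let ν_k(0), ν_k(1) > 0 for each k ∈ K, let α, w₀ ∈ ℝ and w_k ∈ ℝ for k ∈ K, and for x ∈ {0,1} define ν̂(x) = max over (x_k)_{k∈K} ∈ {0,1}^K with x + Σ_{k∈K} x_k ≤ 1 of exp(α(w₀ x + Σ_{k∈K} w_k x_k)) · ∏_{k∈K} ν_k(x_k). Then log(ν̂(1)/ν̂(0)) = α w₀ − max(0, max_{k∈K} (α w_k + m_k)), where m_k = log(ν_k(1)/ν_k(0)). -/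
open BigOperators

/-- the max-product message through a matching-constraint
function node simplifies to a log-likelihood formula: with
`nuHat(x) = max over binary (x_k)_{k∈K} with x + Σ x_k ≤ 1 of
exp(α (w₀ x + Σ w_k x_k)) ∏ ν_k(x_k)`, one has
`log(nuHat(1)/nuHat(0)) = α w₀ − max(0, max_k (α w_k + m_k))` where
`m_k = log(ν_k(1)/ν_k(0))`. -/
theorem stmt13 {K : Type*} [Fintype K] [Nonempty K]
    (ν : K → ℝ → ℝ) (hν0 : ∀ k, 0 < ν k 0) (hν1 : ∀ k, 0 < ν k 1)
    (α w₀ : ℝ) (w : K → ℝ)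
    (nuHat : ℝ → ℝ)
    (hnuHat : ∀ x : ℝ, x = 0 ∨ x = 1 →
      IsGreatest {v : ℝ | ∃ xk : K → ℝ, (∀ k, xk k = 0 ∨ xk k = 1) ∧
        x + ∑ k, xk k ≤ 1 ∧
        v = Real.exp (α * (w₀ * x + ∑ k, w k * xk k)) * ∏ k, ν k (xk k)}
      (nuHat x)) :
    Real.log (nuHat 1 / nuHat 0) =
      α * w₀ - max 0 (Finset.univ.sup' Finset.univ_nonempty
        (fun k => α * w k + Real.log (ν k 1 / ν k 0))) := by
  classical
  set P : ℝ := ∏ k, ν k 0 with hP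
  have hPpos : 0 < P := Finset.prod_pos fun k _ => hν0 k
  set M : ℝ := Finset.univ.sup' Finset.univ_nonempty
      (fun k => α * w k + Real.log (ν k 1 / ν k 0)) with hM
  have hnn : ∀ (xk : K → ℝ), (∀ k, xk k = 0 ∨ xk k = 1) → ∀ k, 0 ≤ xk k := by
    intro xk hb k; rcases hb k with h | h <;> simp [h]
  have key : ∀ k : K, Real.exp (α * w k + Real.log (ν k 1 / ν k 0)) * P
      = Real.exp (α * w k) * (ν k 1 * ∏ j ∈ Finset.univ.erase k, ν j 0) := by
    intro k
    rw [Real.exp_add, Real.exp_log (div_pos (hν1 k) (hν0 k)), hP,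
      ← Finset.mul_prod_erase Finset.univ (fun j => ν j 0) (Finset.mem_univ k)]
    field_simp [(hν0 k).ne']
  -- value of nuHat at 1
  have h1 : nuHat 1 = Real.exp (α * w₀) * P := by
    obtain ⟨⟨xk, hb, hs, hv⟩, -⟩ := hnuHat 1 (Or.inr rfl)
    have hsum0 : ∑ k, xk k = 0 :=
      le_antisymm (by linarith) (Finset.sum_nonneg fun k _ => hnn xk hb k)
    have hall : ∀ k, xk k = 0 := by
      intro k
      exact (Finset.sum_eq_zero_iff_of_nonneg (fun j _ => hnn xk hb j)).mp hsum0 k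
        (Finset.mem_univ k)
    simp [hv, hall, hP]
  -- value of nuHat at 0
  have h0 : nuHat 0 = Real.exp (max 0 M) * P := by
    refine (hnuHat 0 (Or.inl rfl)).unique ⟨?_, ?_⟩
    · -- membership
      rcases le_or_gt M 0 with hMle | hMpos
      · refine ⟨fun _ => 0, fun k => Or.inl rfl, by simp, ?_⟩
        simp [max_eq_left hMle, hP]
      · obtain ⟨k0, -, hk0⟩ := Finset.exists_mem_eq_sup' Finset.univ_nonempty
          (fun k => α * w k + Real.log (ν k 1 / ν k 0))
        refine ⟨fun j => if j = k0 then 1 else 0,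
          fun j => by by_cases h : j = k0 <;> simp [h], by simp, ?_⟩
        have hsum : (∑ j, w j * (if j = k0 then 1 else 0)) = w k0 := by
          rw [Finset.sum_eq_single k0]
          · simp
          · intro j _ hj; simp [hj]
          · intro h; exact absurd (Finset.mem_univ k0) h
        have hprod : (∏ j, ν j (if j = k0 then 1 else 0))
            = ν k0 1 * ∏ j ∈ Finset.univ.erase k0, ν j 0 := by
          rw [← Finset.mul_prod_erase Finset.univ _ (Finset.mem_univ k0)]
          simp only [if_pos rfl]
          congr 1
          refine Finset.prod_congr rfl fun j hj => ?_
          rw [if_neg (Finset.ne_of_mem_erase hj)]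
        rw [hsum, hprod, max_eq_right hMpos.le, hM, hk0, key]
        ring_nf
    · -- upper bound
      rintro v ⟨xk, hb, hs, hv⟩
      by_cases hz : ∀ k, xk k = 0
      · have : v = P := by simp [hv, hz, hP]
        rw [this]
        exact le_mul_of_one_le_left hPpos.le (Real.one_le_exp (le_max_left 0 M))
      · push_neg at hz
        obtain ⟨k0, hk0⟩ := hz
        have hk01 : xk k0 = 1 := (hb k0).resolve_left hk0
        have hother : ∀ j, j ≠ k0 → xk j = 0 := by
          intro j hj
          by_contra hj0
          have hj1 : xk j = 1 := (hb j).resolve_left hj0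
          have hsub : ({k0, j} : Finset K).sum xk ≤ Finset.univ.sum xk :=
            Finset.sum_le_sum_of_subset_of_nonneg (Finset.subset_univ _)
              (fun i _ _ => hnn xk hb i)
          rw [Finset.sum_pair (Ne.symm hj)] at hsub
          rw [hk01, hj1] at hsub
          linarith
        have hsum : (∑ j, w j * xk j) = w k0 := by
          rw [Finset.sum_eq_single k0]
          · rw [hk01, mul_one]
          · intro j _ hj; rw [hother j hj, mul_zero]
          · intro h; exact absurd (Finset.mem_univ k0) h
        have hprod : (∏ j, ν j (xk j))
            = ν k0 1 * ∏ j ∈ Finset.univ.erase k0, ν j 0 := by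
          rw [← Finset.mul_prod_erase Finset.univ _ (Finset.mem_univ k0), hk01]
          congr 1
          refine Finset.prod_congr rfl fun j hj => ?_
          rw [hother j (Finset.ne_of_mem_erase hj)]
        have hvk : v = Real.exp (α * w k0 + Real.log (ν k0 1 / ν k0 0)) * P := by
          rw [hv, hsum, hprod, key]
          ring_nf
        rw [hvk]
        have hleM : α * w k0 + Real.log (ν k0 1 / ν k0 0) ≤ M := by
          rw [hM]
          exact Finset.le_sup' (fun k => α * w k + Real.log (ν k 1 / ν k 0))
            (Finset.mem_univ k0)
        have hle : α * w k0 + Real.log (ν k0 1 / ν k0 0) ≤ max 0 M :=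
          le_trans hleM (le_max_right 0 M)
        exact mul_le_mul_of_nonneg_right (Real.exp_le_exp.mpr hle) hPpos.le
  rw [h1, h0]
  have : Real.exp (α * w₀) * P / (Real.exp (max 0 M) * P)
      = Real.exp (α * w₀ - max 0 M) := by
    rw [Real.exp_sub]
    field_simp
  rw [this, Real.log_exp]
end
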